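/- If A is an invertible real n×n matrix, then the orthogonal matrix Q = A(√(AᵀA))⁻¹ is the unique matrix in O(n,ℝ) minimizing the Frobenius distance ‖A − B‖ over B ∈ O(n,ℝ); in particular Q ∈ O(n,ℝ) and d(A, O(n,ℝ)) = ‖A − Q‖. -/

import Mathlib

open Matrix

/-- The Frobenius norm ‖X‖ = √tr(XᵀX) of a real square matrix. -/
noncomputable def frobNorm {n : ℕ} (X : Matrix (Fin n) (Fin n) ℝ) : ℝ :=
  Real.sqrt (Matrix.trace (Xᵀ * X))

lemma trace_self_mul_transpose_nonneg {n : ℕ} (D : Matrix (Fin n) (Fin n) ℝ) :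
    0 ≤ (D * Dᵀ).trace := by
  simp only [Matrix.trace, Matrix.diag, Matrix.mul_apply, Matrix.transpose_apply]
  exact Finset.sum_nonneg fun i _ => Finset.sum_nonneg fun j _ => mul_self_nonneg _

lemma eq_zero_of_trace_self_mul_transpose {n : ℕ} (D : Matrix (Fin n) (Fin n) ℝ)
    (h : (D * Dᵀ).trace = 0) : D = 0 := by
  simp only [Matrix.trace, Matrix.diag, Matrix.mul_apply, Matrix.transpose_apply] at h
  ext i j
  have h1 := (Finset.sum_eq_zero_iff_of_nonneg
    (fun i _ => Finset.sum_nonneg fun j _ => mul_self_nonneg (D i j))).mp h i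
    (Finset.mem_univ i)
  have h2 := (Finset.sum_eq_zero_iff_of_nonneg
    (fun j _ => mul_self_nonneg (D i j))).mp h1 j (Finset.mem_univ j)
  simpa [mul_self_eq_zero] using h2

lemma trace_orth_mul_le {n : ℕ} (S U : Matrix (Fin n) (Fin n) ℝ)
    (hS : S.PosSemidef) (hU : U * Uᵀ = 1) :
    (U * S).trace ≤ S.trace ∧ ((U * S).trace = S.trace → S * U = S) := by
  obtain ⟨C, hC⟩ : ∃ C : Matrix (Fin n) (Fin n) ℝ, S = Cᴴ * C := by
    open scoped MatrixOrder in
    obtain ⟨C, hC⟩ := CStarAlgebra.nonneg_iff_eq_star_mul_self.mp hS.nonneg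
    exact ⟨C, hC⟩
  rw [Matrix.conjTranspose_eq_transpose_of_trivial] at hC
  set D := C - C * U with hD
  have h4 : C * U * Uᵀ * Cᵀ = C * Cᵀ := by
    rw [Matrix.mul_assoc C U Uᵀ, hU, Matrix.mul_one]
  have expand : D * Dᵀ = C * Cᵀ - C * Uᵀ * Cᵀ - C * U * Cᵀ + C * U * Uᵀ * Cᵀ := by
    simp only [hD, Matrix.transpose_sub, Matrix.transpose_mul]
    noncomm_ring
  rw [h4] at expand
  have tr2 : (C * U * Cᵀ).trace = (U * S).trace := by
    rw [Matrix.trace_mul_cycle, ← hC, Matrix.trace_mul_comm]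
  have tr1 : (C * Uᵀ * Cᵀ).trace = (U * S).trace := by
    have ht : C * Uᵀ * Cᵀ = (C * U * Cᵀ)ᵀ := by
      simp [Matrix.transpose_mul, Matrix.mul_assoc]
    rw [ht, Matrix.trace_transpose, tr2]
  have tr0 : (C * Cᵀ).trace = S.trace := by
    rw [Matrix.trace_mul_comm, hC]
  have hDD : (D * Dᵀ).trace = 2 * (S.trace - (U * S).trace) := by
    rw [expand]
    simp only [Matrix.trace_add, Matrix.trace_sub, tr0, tr1, tr2]
    ring
  have hnn := trace_self_mul_transpose_nonneg D
  constructor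
  · nlinarith [hnn, hDD]
  · intro heq
    have hz : (D * Dᵀ).trace = 0 := by rw [hDD, heq]; ring
    have hD0 : D = 0 := eq_zero_of_trace_self_mul_transpose D hz
    have hCU : C * U = C := by
      have := sub_eq_zero.mp hD0
      exact this.symm
    calc S * U = Cᵀ * C * U := by rw [← hC]
      _ = Cᵀ * (C * U) := by rw [Matrix.mul_assoc]
      _ = Cᵀ * C := by rw [hCU]
      _ = S := by rw [← hC]

/-- If A is an invertible real n×n matrix, then Q = A(√(AᵀA))⁻¹ is the unique
matrix in O(n,ℝ) minimizing the Frobenius distance ‖A − B‖ over B ∈ O(n,ℝ); in particular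
Q ∈ O(n,ℝ) and d(A, O(n,ℝ)) = ‖A − Q‖ (expressed via `IsLeast`: ‖A − Q‖ is the least element of
the set of distances from A to orthogonal matrices).  Here `S` is the unique positive
semidefinite square root of AᵀA. -/
theorem polar_factor_unique_minimizer {n : ℕ} (A S : Matrix (Fin n) (Fin n) ℝ)
    (hA : IsUnit A.det) (hS : S.PosSemidef) (hSS : S * S = Aᵀ * A) :
    (A * S⁻¹)ᵀ * (A * S⁻¹) = 1 ∧
    IsLeast {x : ℝ | ∃ B : Matrix (Fin n) (Fin n) ℝ, Bᵀ * B = 1 ∧ x = frobNorm (A - B)}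
      (frobNorm (A - A * S⁻¹)) ∧
    ∀ B : Matrix (Fin n) (Fin n) ℝ, Bᵀ * B = 1 →
      frobNorm (A - B) = frobNorm (A - A * S⁻¹) → B = A * S⁻¹ := by
  have hSt : Sᵀ = S := by
    have h := hS.1
    rwa [Matrix.IsHermitian, Matrix.conjTranspose_eq_transpose_of_trivial] at h
  have hSd : IsUnit S.det := by
    have hdet : S.det * S.det = A.det * A.det := by
      have := congrArg Matrix.det hSS
      simpa [Matrix.det_mul, Matrix.det_transpose] using this
    have : IsUnit (S.det * S.det) := hdet ▸ hA.mul hA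
    exact isUnit_of_mul_isUnit_left this
  set Q := A * S⁻¹ with hQdef
  have hSiT : (S⁻¹)ᵀ = S⁻¹ := by rw [Matrix.transpose_nonsing_inv, hSt]
  have hQS : Q * S = A := by
    rw [hQdef, Matrix.mul_assoc, Matrix.nonsing_inv_mul _ hSd, Matrix.mul_one]
  have hQorth : Qᵀ * Q = 1 := by
    rw [hQdef, Matrix.transpose_mul, hSiT]
    calc S⁻¹ * Aᵀ * (A * S⁻¹) = S⁻¹ * (Aᵀ * A) * S⁻¹ := by
          rw [Matrix.mul_assoc, Matrix.mul_assoc, Matrix.mul_assoc]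
      _ = S⁻¹ * (S * S) * S⁻¹ := by rw [hSS]
      _ = S⁻¹ * S * (S * S⁻¹) := by
          rw [Matrix.mul_assoc, Matrix.mul_assoc, Matrix.mul_assoc]
      _ = 1 := by
          rw [Matrix.nonsing_inv_mul _ hSd, Matrix.mul_nonsing_inv _ hSd, Matrix.one_mul]
  have hQQt : Q * Qᵀ = 1 := mul_eq_one_comm.mp hQorth
  -- trace expansion
  have texp : ∀ B : Matrix (Fin n) (Fin n) ℝ, Bᵀ * B = 1 →
      ((A - B)ᵀ * (A - B)).trace = (Aᵀ * A).trace + (n : ℝ) - 2 * (Bᵀ * A).trace := by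
    intro B hB
    have h1 : (A - B)ᵀ * (A - B) = Aᵀ * A - Aᵀ * B - Bᵀ * A + Bᵀ * B := by
      simp only [Matrix.transpose_sub]
      noncomm_ring
    have h2 : (Aᵀ * B).trace = (Bᵀ * A).trace := by
      rw [← Matrix.trace_transpose (Aᵀ * B), Matrix.transpose_mul, Matrix.transpose_transpose]
    rw [h1, hB]
    simp only [Matrix.trace_add, Matrix.trace_sub, Matrix.trace_one, h2, Fintype.card_fin]
    ring
  have hQA : (Qᵀ * A).trace = S.trace := by
    have : Qᵀ * A = S := by
      rw [← hQS, ← Matrix.mul_assoc, hQorth, Matrix.one_mul]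
    rw [this]
  -- key inequality for any orthogonal B
  have key : ∀ B : Matrix (Fin n) (Fin n) ℝ, Bᵀ * B = 1 →
      ((Bᵀ * Q) * S).trace ≤ S.trace ∧
        (((Bᵀ * Q) * S).trace = S.trace → S * (Bᵀ * Q) = S) := by
    intro B hB
    have hBBt : B * Bᵀ = 1 := mul_eq_one_comm.mp hB
    apply trace_orth_mul_le S (Bᵀ * Q) hS
    calc Bᵀ * Q * (Bᵀ * Q)ᵀ = Bᵀ * Q * (Qᵀ * B) := by
          rw [Matrix.transpose_mul, Matrix.transpose_transpose]
      _ = Bᵀ * (Q * Qᵀ) * B := by noncomm_ring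
      _ = Bᵀ * B := by rw [hQQt, Matrix.mul_one]
      _ = 1 := hB
  have hBA : ∀ B : Matrix (Fin n) (Fin n) ℝ, Bᵀ * A = (Bᵀ * Q) * S := by
    intro B
    rw [Matrix.mul_assoc, hQS]
  have hnnX : ∀ X : Matrix (Fin n) (Fin n) ℝ, 0 ≤ (Xᵀ * X).trace := by
    intro X
    simpa using trace_self_mul_transpose_nonneg Xᵀ
  have tQ : ((A - Q)ᵀ * (A - Q)).trace = (Aᵀ * A).trace + (n : ℝ) - 2 * S.trace := by
    rw [texp Q hQorth, hQA]
  -- inequality of traces, hence of frobNorms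
  have tle : ∀ B : Matrix (Fin n) (Fin n) ℝ, Bᵀ * B = 1 →
      ((A - Q)ᵀ * (A - Q)).trace ≤ ((A - B)ᵀ * (A - B)).trace := by
    intro B hB
    have h1 := (key B hB).1
    rw [texp B hB, hBA B, tQ]
    linarith
  refine ⟨hQorth, ⟨⟨Q, hQorth, rfl⟩, ?_⟩, ?_⟩
  · rintro x ⟨B, hB, rfl⟩
    exact Real.sqrt_le_sqrt (tle B hB)
  · intro B hB heq
    have h1 : ((A - B)ᵀ * (A - B)).trace = ((A - Q)ᵀ * (A - Q)).trace := by
      have hb := hnnX (A - B)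
      have hq := hnnX (A - Q)
      have : Real.sqrt (((A - B)ᵀ * (A - B)).trace)
          = Real.sqrt (((A - Q)ᵀ * (A - Q)).trace) := heq
      calc ((A - B)ᵀ * (A - B)).trace
          = Real.sqrt (((A - B)ᵀ * (A - B)).trace) ^ 2 := (Real.sq_sqrt hb).symm
        _ = Real.sqrt (((A - Q)ᵀ * (A - Q)).trace) ^ 2 := by rw [this]
        _ = ((A - Q)ᵀ * (A - Q)).trace := Real.sq_sqrt hq
    have h2 : ((Bᵀ * Q) * S).trace = S.trace := by
      have := h1
      rw [texp B hB, hBA B, tQ] at this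
      linarith
    have h3 : S * (Bᵀ * Q) = S := (key B hB).2 h2
    have h4 : Bᵀ * Q = 1 := by
      have := congrArg (fun M => S⁻¹ * M) h3
      simpa [← Matrix.mul_assoc, Matrix.nonsing_inv_mul _ hSd] using this
    have hBBt : B * Bᵀ = 1 := mul_eq_one_comm.mp hB
    calc B = B * (Bᵀ * Q) := by rw [h4, Matrix.mul_one]
      _ = B * Bᵀ * Q := by rw [Matrix.mul_assoc]
      _ = Q := by rw [hBBt, Matrix.one_mul]
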